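/- Let (R',P'_Ω) and (R,P_Ω) be multiple Rota-Baxter algebras of pair weight (λ_Ω,λ_Ω). Let (M,𝔪^{R'}_Ω,𝔪^R_Ω) be an (R',P'_Ω)-(R,P_Ω)-bimodule and (N,𝔫^R_Ω) a right (R,P_Ω)-module. Then Hom_{(R,P_Ω)}(M,N) is a right (R',P'_Ω)-module, where the right R'-action is (φr')(m) := φ(r'm) and the operators are 𝔮_ω(φ)(m) := φ(𝔪^{R'}_ω(m)). In particular: (i) for every right (R,P_Ω)-module homomorphism φ : M → N and every r' ∈ R', ω ∈ Ω, the maps φr' and 𝔮_ω(φ) are again right (R,P_Ω)-module homomorphisms; and (ii) 𝔮_β(φ·P'_α(r')) = 𝔮_β(𝔮_α(φ)·r') + 𝔮_β(φ)·P'_α(r') + λ_β·𝔮_α(φ)·r' + λ_α·𝔮_β(φ)·r' for all r' ∈ R', α,β ∈ Ω. -/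
import Mathlib


open MulOpposite in
/-- If `(M, 𝔪^{R'}_Ω, 𝔪^R_Ω)` is an `(R', P'_Ω)`-`(R, P_Ω)`-bimodule
and `(N, 𝔫_Ω)` is a right `(R, P_Ω)`-module, then the set of right `(R, P_Ω)`-module
homomorphisms `Hom_{(R,P_Ω)}(M, N)` is a right `(R', P'_Ω)`-module with action
`(φ·r')(m) := φ(r'·m)` and operators `𝔮_ω(φ)(m) := φ(𝔪^{R'}_ω(m))`; in particular
`φ·r'` and `𝔮_ω(φ)` are again right `(R, P_Ω)`-module homomorphisms, and the right
multiple Rota-Baxter module identity holds for the `𝔮_ω`. -/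
theorem hom_from_bimodule_is_right_multiple_rota_baxter_module
    (k : Type*) [CommRing k]
    (R : Type*) [Ring R] [Algebra k R]
    (R' : Type*) [Ring R'] [Algebra k R']
    (Ω : Type*) [Nonempty Ω]
    (lam : Ω → k)
    (P : Ω → R →ₗ[k] R)
    (hP : ∀ (α β : Ω) (r₁ r₂ : R),
      P α r₁ * P β r₂ =
        P α (r₁ * P β r₂) + P β (P α r₁ * r₂)
          + lam β • P α (r₁ * r₂) + lam α • P β (r₁ * r₂))
    (P' : Ω → R' →ₗ[k] R')
    (hP' : ∀ (α β : Ω) (r₁ r₂ : R'),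
      P' α r₁ * P' β r₂ =
        P' α (r₁ * P' β r₂) + P' β (P' α r₁ * r₂)
          + lam β • P' α (r₁ * r₂) + lam α • P' β (r₁ * r₂))
    -- `M` is an `(R', P'_Ω)`-`(R, P_Ω)`-bimodule
    (M : Type*) [AddCommGroup M] [Module k M] [Module R' M] [Module Rᵐᵒᵖ M]
    [IsScalarTower k R' M] [IsScalarTower k Rᵐᵒᵖ M]
    [SMulCommClass R' Rᵐᵒᵖ M] [SMulCommClass Rᵐᵒᵖ R' M]
    (mR' : Ω → M →ₗ[k] M) (mR : Ω → M →ₗ[k] M)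
    (hMl : ∀ (α β : Ω) (x : R') (m : M),
      P' α x • mR' β m =
        mR' α (x • mR' β m) + mR' β (P' α x • m)
          + lam β • mR' α (x • m) + lam α • mR' β (x • m))
    (hMr : ∀ (α β : Ω) (x : R) (m : M),
      mR β (op (P α x) • m) =
        mR β (op x • mR α m) + op (P α x) • mR β m
          + lam β • (op x • mR α m) + lam α • (op x • mR β m))
    (hcomp₁ : ∀ (ω : Ω) (r' : R') (m : M), mR ω (r' • m) = r' • mR ω m)
    (hcomp₂ : ∀ (ω : Ω) (r : R) (m : M), mR' ω (op r • m) = op r • mR' ω m)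
    (hcomp₃ : ∀ (ω τ : Ω) (m : M), mR' ω (mR τ m) = mR τ (mR' ω m))
    -- `N` is a right `(R, P_Ω)`-module
    (N : Type*) [AddCommGroup N] [Module k N] [Module Rᵐᵒᵖ N] [IsScalarTower k Rᵐᵒᵖ N]
    (nOp : Ω → N →ₗ[k] N)
    (hN : ∀ (α β : Ω) (x : R) (n : N),
      nOp β (op (P α x) • n) =
        nOp β (op x • nOp α n) + op (P α x) • nOp β n
          + lam β • (op x • nOp α n) + lam α • (op x • nOp β n)) :
    -- the homomorphisms form an abelian subgroup of `Hom_R(M, N)`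
    (∃ H : AddSubgroup (M →ₗ[Rᵐᵒᵖ] N),
      (H : Set (M →ₗ[Rᵐᵒᵖ] N)) =
        {φ : M →ₗ[Rᵐᵒᵖ] N | ∀ (ω : Ω) (m : M), φ (mR ω m) = nOp ω (φ m)}) ∧
    ∀ φ : M →ₗ[Rᵐᵒᵖ] N, (∀ (ω : Ω) (m : M), φ (mR ω m) = nOp ω (φ m)) →
      -- (i) `φ·r'`, with `(φ·r')(m) = φ(r'·m)`, is again a right `(R, P_Ω)`-module hom
      (∀ r' : R', ∃ ψ : M →ₗ[Rᵐᵒᵖ] N,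
        (∀ m : M, ψ m = φ (r' • m)) ∧
        ∀ (τ : Ω) (m : M), ψ (mR τ m) = nOp τ (ψ m)) ∧
      -- (i) `𝔮_ω(φ)`, with `𝔮_ω(φ)(m) = φ(𝔪^{R'}_ω(m))`, is again such a hom
      (∀ ω : Ω, ∃ ψ : M →ₗ[Rᵐᵒᵖ] N,
        (∀ m : M, ψ m = φ (mR' ω m)) ∧
        ∀ (τ : Ω) (m : M), ψ (mR τ m) = nOp τ (ψ m)) ∧
      -- (ii) the right multiple Rota-Baxter module identity for `𝔮_Ω`, pointwise
      (∀ (r' : R') (α β : Ω) (m : M),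
        φ (P' α r' • mR' β m) =
          φ (mR' α (r' • mR' β m)) + φ (mR' β (P' α r' • m))
            + lam β • φ (mR' α (r' • m)) + lam α • φ (mR' β (r' • m))) := by
  have hk : ∀ (φ : M →ₗ[Rᵐᵒᵖ] N) (c : k) (m : M), φ (c • m) = c • φ m := by
    intro φ c m
    rw [show c • m = (c • (1:Rᵐᵒᵖ)) • m by rw [smul_assoc, one_smul],
      map_smul, smul_assoc, one_smul]
  constructor
  · refine ⟨{ carrier := ({φ : M →ₗ[Rᵐᵒᵖ] N | ∀ (ω : Ω) (m : M), φ (mR ω m) = nOp ω (φ m)} : Set _)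
              zero_mem' := by intro ω m; simp
              add_mem' := by
                intro φ ψ hφ hψ ω m
                simp [hφ ω m, hψ ω m]
              neg_mem' := by
                intro φ hφ ω m
                simp [hφ ω m] }, rfl⟩
  · intro φ hφ
    refine ⟨?_, ?_, ?_⟩
    · intro r'
      refine ⟨{ toFun := fun m => φ (r' • m)
                map_add' := by intro m₁ m₂; simp only [smul_add, map_add]
                map_smul' := by
                  intro x m
                  show φ (r' • x • m) = x • φ (r' • m)
                  rw [smul_comm, map_smul] }, fun m => rfl, ?_⟩
      intro τ m
      simp only [LinearMap.coe_mk, AddHom.coe_mk]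
      rw [← hcomp₁ τ r' m, hφ τ (r' • m)]
    · intro ω
      refine ⟨{ toFun := fun m => φ (mR' ω m)
                map_add' := by intro m₁ m₂; simp only [map_add]
                map_smul' := by
                  intro x m
                  show φ (mR' ω (x • m)) = x • φ (mR' ω m)
                  rw [← MulOpposite.op_unop x, hcomp₂ ω x.unop m, map_smul] }, fun m => rfl, ?_⟩
      intro τ m
      simp only [LinearMap.coe_mk, AddHom.coe_mk]
      rw [hcomp₃ ω τ m, hφ τ (mR' ω m)]
    · intro r' α β m
      rw [hMl α β r' m, map_add, map_add, map_add, hk, hk]
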